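/- Let (S,T) be a pair of random variables on {0,...,m} × {0,...,n} with binomial moments S_{i,j} = E[C(S,i) C(T,j)]. For 1 ≤ s ≤ k ≤ m and 1 ≤ t ≤ l ≤ n define A^{(s,t)}_{k,l} = [∑_{i=s}^{k} ∑_{j=t}^{l} (−1)^{i+j−s−t} C(i−1,i−s) C(m−i,k−i) C(j−1,j−t) C(n−j,l−j) S_{i,j}] / (C(m−s,k−s) C(n−t,l−t)). Then for fixed (s,t,l), A^{(s,t)}_{k,l} − A^{(s,t)}_{k+1,l} = (s/(m−s)) A^{(s+1,t)}_{k+1,l} for s ≤ k ≤ m−1 with s < m, and consequently A^{(s,t)}_{k,l} is non-increasing and convex in k. (Monotonicity and convexity of Chung-type bounds) -/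

import Mathlib

open MeasureTheory Finset

lemma alt_range (N : ℕ) (hN : N ≠ 0) :
    ∑ d ∈ range (N + 1), ((-1 : ℝ)) ^ d * (N.choose d) = 0 := by
  have h := add_pow (-1 : ℝ) 1 N
  simp only [one_pow, mul_one, neg_add_cancel, zero_pow hN] at h
  simpa using h.symm

lemma altsum0 (r u : ℕ) (h : r < u) :
    ∑ j ∈ Icc r u, ((-1 : ℝ)) ^ (j - r) * (j.choose r) * (u.choose j) = 0 := by
  have h1 : ∀ j ∈ Icc r u, ((-1 : ℝ)) ^ (j - r) * (j.choose r) * (u.choose j)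
      = (u.choose r : ℝ) * (((-1 : ℝ)) ^ (j - r) * ((u - r).choose (j - r))) := by
    intro j hj
    simp only [mem_Icc] at hj
    have hc : (u.choose j : ℝ) * (j.choose r) = (u.choose r : ℝ) * ((u - r).choose (j - r)) := by
      exact_mod_cast congrArg (Nat.cast : ℕ → ℝ) (Nat.choose_mul (n := u) hj.1)
    linear_combination ((-1 : ℝ)) ^ (j - r) * hc
  rw [Finset.sum_congr rfl h1, ← Finset.mul_sum]
  have h2 : ∑ j ∈ Icc r u, ((-1 : ℝ)) ^ (j - r) * ((u - r).choose (j - r))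
      = ∑ d ∈ range ((u - r) + 1), ((-1 : ℝ)) ^ d * ((u - r).choose d) := by
    rw [← Finset.Ico_add_one_right_eq_Icc, Finset.sum_Ico_eq_sum_range]
    apply Finset.sum_congr (by congr 1; omega)
    intro d _
    have : r + d - r = d := by omega
    rw [this]
  rw [h2, alt_range _ (by omega), mul_zero]

lemma gsum : ∀ u s : ℕ, 1 ≤ s → s ≤ u →
    ∑ i ∈ Icc s u, ((-1 : ℝ)) ^ (i - s) * ((i - 1).choose (s - 1)) * (u.choose i) = 1 := by
  intro u
  induction u with
  | zero => intro s hs1 hsu; omega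
  | succ u ih =>
    intro s hs1 hsu
    rcases eq_or_lt_of_le hsu with heq | hlt
    · subst heq
      simp
    · have hsu' : s ≤ u := by omega
      have hsplit : ∀ i ∈ Icc s (u + 1),
          ((-1 : ℝ)) ^ (i - s) * ((i - 1).choose (s - 1)) * ((u + 1).choose i)
          = ((-1 : ℝ)) ^ (i - s) * ((i - 1).choose (s - 1)) * (u.choose (i - 1))
            + ((-1 : ℝ)) ^ (i - s) * ((i - 1).choose (s - 1)) * (u.choose i) := by
        intro i hi
        simp only [mem_Icc] at hi
        have h1 : (u + 1).choose i = u.choose (i - 1) + u.choose i := by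
          have : i = (i - 1) + 1 := by omega
          rw [this, Nat.choose_succ_succ']
          congr 2 <;> omega
        rw [h1]
        push_cast
        ring
      rw [Finset.sum_congr rfl hsplit, Finset.sum_add_distrib]
      have h2 : ∑ i ∈ Icc s (u + 1),
          ((-1 : ℝ)) ^ (i - s) * ((i - 1).choose (s - 1)) * (u.choose i)
          = ∑ i ∈ Icc s u, ((-1 : ℝ)) ^ (i - s) * ((i - 1).choose (s - 1)) * (u.choose i) := by
        rw [Finset.sum_Icc_succ_top (by omega)]
        rw [Nat.choose_eq_zero_of_lt (show u < u + 1 by omega)]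
        simp
      have h3 : ∑ i ∈ Icc s (u + 1),
          ((-1 : ℝ)) ^ (i - s) * ((i - 1).choose (s - 1)) * (u.choose (i - 1)) = 0 := by
        have hmap : Icc s (u + 1) = Finset.map (addRightEmbedding 1) (Icc (s - 1) u) := by
          rw [Finset.map_add_right_Icc]
          congr 1
          omega
        rw [hmap, Finset.sum_map]
        have : ∀ j ∈ Icc (s - 1) u,
            ((-1 : ℝ)) ^ (addRightEmbedding 1 j - s) * (((addRightEmbedding 1 j) - 1).choose (s - 1))
              * (u.choose ((addRightEmbedding 1 j) - 1))
            = ((-1 : ℝ)) ^ (j - (s - 1)) * (j.choose (s - 1)) * (u.choose j) := by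
          intro j hj
          simp only [mem_Icc] at hj
          simp only [addRightEmbedding_apply, Nat.add_sub_cancel]
          have hes : j + 1 - s = j - (s - 1) := by omega
          rw [hes]
        rw [Finset.sum_congr rfl this]
        exact altsum0 (s - 1) u (by omega)
      rw [h2, h3, zero_add]
      exact ih s hs1 hsu'

lemma trinom (x u i : ℕ) (h : i ≤ u) :
    x.choose u * u.choose i = x.choose i * (x - i).choose (u - i) := by
  rcases le_or_gt u x with hux | hux
  · exact Nat.choose_mul h
  · rcases le_or_gt i x with hix | hix
    · rw [Nat.choose_eq_zero_of_lt hux, Nat.choose_eq_zero_of_lt (show x - i < u - i by omega),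
        Nat.zero_mul, Nat.mul_zero]
    · rw [Nat.choose_eq_zero_of_lt hux, Nat.choose_eq_zero_of_lt hix, Nat.zero_mul, Nat.zero_mul]

lemma chooseD (m k x i : ℕ) (hik : i ≤ k) (hkm : k ≤ m) (hxm : x ≤ m) :
    x.choose i * (m - i).choose (k - i)
      = ∑ u ∈ Icc i k, u.choose i * (x.choose u * ((m - x).choose (k - u))) := by
  rcases le_or_gt i x with hix | hix
  · have hsplit : m - i = (x - i) + (m - x) := by omega
    rw [hsplit, Nat.add_choose_eq, Finset.Nat.sum_antidiagonal_eq_sum_range_succ_mk,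
      Finset.mul_sum]
    rw [← Finset.Ico_add_one_right_eq_Icc, Finset.sum_Ico_eq_sum_range]
    rw [show k + 1 - i = k - i + 1 by omega]
    apply Finset.sum_congr rfl
    intro r hr
    simp only [mem_range] at hr
    have ht := trinom x (i + r) i (by omega)
    have h1 : i + r - i = r := by omega
    have h2 : k - (i + r) = k - i - r := by omega
    rw [h1] at ht
    simp only
    rw [h2]
    calc x.choose i * ((x - i).choose r * (m - x).choose (k - i - r))
        = x.choose i * (x - i).choose r * (m - x).choose (k - i - r) := by ring
      _ = x.choose (i + r) * (i + r).choose i * (m - x).choose (k - i - r) := by rw [ht]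
      _ = _ := by ring
  · rw [Nat.choose_eq_zero_of_lt hix, Nat.zero_mul]
    symm
    apply Finset.sum_eq_zero
    intro u hu
    simp only [mem_Icc] at hu
    rw [Nat.choose_eq_zero_of_lt (show x < u by omega), Nat.zero_mul, Nat.mul_zero]

lemma closedForm (m s k x : ℕ) (hs1 : 1 ≤ s) (hsk : s ≤ k) (hkm : k ≤ m) (hxm : x ≤ m) :
    ∑ i ∈ Icc s k, ((-1 : ℝ)) ^ (i - s) * ((i - 1).choose (i - s)) * ((m - i).choose (k - i))
        * (x.choose i)
      = ∑ u ∈ Icc s k, (x.choose u : ℝ) * ((m - x).choose (k - u)) := by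
  have step : ∀ i ∈ Icc s k,
      ((-1 : ℝ)) ^ (i - s) * ((i - 1).choose (i - s)) * ((m - i).choose (k - i)) * (x.choose i)
      = ∑ u ∈ Icc i k, ((-1 : ℝ)) ^ (i - s) * ((i - 1).choose (s - 1)) * (u.choose i)
          * ((x.choose u : ℝ) * ((m - x).choose (k - u))) := by
    intro i hi
    simp only [mem_Icc] at hi
    have hsym : (i - 1).choose (i - s) = (i - 1).choose (s - 1) := by
      rw [← Nat.choose_symm (show i - s ≤ i - 1 by omega)]
      congr 1
      omega
    have hD : (x.choose i : ℝ) * ((m - i).choose (k - i))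
        = ∑ u ∈ Icc i k, (u.choose i : ℝ) * ((x.choose u : ℝ) * ((m - x).choose (k - u))) := by
      exact_mod_cast congrArg (Nat.cast : ℕ → ℝ) (chooseD m k x i hi.2 hkm hxm)
    calc ((-1 : ℝ)) ^ (i - s) * ((i - 1).choose (i - s)) * ((m - i).choose (k - i)) * (x.choose i)
        = ((-1 : ℝ)) ^ (i - s) * ((i - 1).choose (s - 1))
            * ((x.choose i : ℝ) * ((m - i).choose (k - i))) := by rw [hsym]; ring
      _ = _ := by
          rw [hD, Finset.mul_sum]
          apply Finset.sum_congr rfl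
          intro u _
          ring
  rw [Finset.sum_congr rfl step]
  have hswap : ∑ i ∈ Icc s k, ∑ u ∈ Icc i k,
      ((-1 : ℝ)) ^ (i - s) * ((i - 1).choose (s - 1)) * (u.choose i)
        * ((x.choose u : ℝ) * ((m - x).choose (k - u)))
      = ∑ u ∈ Icc s k, ∑ i ∈ Icc s u,
      ((-1 : ℝ)) ^ (i - s) * ((i - 1).choose (s - 1)) * (u.choose i)
        * ((x.choose u : ℝ) * ((m - x).choose (k - u))) := by
    simp only [← Finset.Ico_add_one_right_eq_Icc]
    rw [Finset.sum_Ico_Ico_comm]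
  rw [hswap]
  apply Finset.sum_congr rfl
  intro u hu
  simp only [mem_Icc] at hu
  rw [← Finset.sum_mul, gsum u s hs1 hu.1, one_mul]

lemma factA (m s k : ℕ) (hs1 : 1 ≤ s) (hsm : s < m) (hsk : s ≤ k) (hkm : k + 1 ≤ m) :
    (m - s) * ((m - s - 1).choose (k - s)) = ((m - s).choose (k + 1 - s)) * (k + 1 - s) := by
  have h := Nat.add_one_mul_choose_eq (m - s - 1) (k - s)
  rw [show m - s - 1 + 1 = m - s by omega, show k - s + 1 = k + 1 - s by omega] at h
  exact h

lemma N1 (m s k i : ℕ) (hs1 : 1 ≤ s) (hsi : s + 1 ≤ i) (hik : i ≤ k) (hkm : k + 1 ≤ m) :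
    (m - s) * ((m - s - 1).choose (k - s)) * (((i - 1).choose (s - 1)) * (((m - s).choose (k - s))
        * ((m - i).choose (k + 1 - i))))
      = (m - s) * ((m - s - 1).choose (k - s)) * (((i - 1).choose (s - 1))
          * (((m - s).choose (k + 1 - s)) * ((m - i).choose (k - i))))
        + s * (((m - s).choose (k - s)) * (((m - s).choose (k + 1 - s))
          * (((i - 1).choose s) * ((m - i).choose (k + 1 - i))))) := by
  have ha := factA m s k hs1 (by omega) (by omega) hkm
  have hb : ((i - 1).choose s) * s = ((i - 1).choose (s - 1)) * (i - s) := by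
    have h := Nat.choose_succ_right_eq (i - 1) (s - 1)
    rw [show s - 1 + 1 = s by omega, show i - 1 - (s - 1) = i - s by omega] at h
    exact h
  have hc : ((m - i).choose (k + 1 - i)) * (k + 1 - i) = ((m - i).choose (k - i)) * (m - k) := by
    have h := Nat.choose_succ_right_eq (m - i) (k - i)
    rw [show k - i + 1 = k + 1 - i by omega, show m - i - (k - i) = m - k by omega] at h
    exact h
  have hd : ((m - s).choose (k + 1 - s)) * (k + 1 - s) = ((m - s).choose (k - s)) * (m - k) := by
    have h := Nat.choose_succ_right_eq (m - s) (k - s)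
    rw [show k - s + 1 = k + 1 - s by omega, show m - s - (k - s) = m - k by omega] at h
    exact h
  zify [show s ≤ m by omega, show s ≤ k + 1 by omega, show s ≤ i by omega,
    show i ≤ k + 1 by omega, show k ≤ m by omega] at ha hb hc hd ⊢
  linear_combination
    ((((i - 1).choose (s - 1) : ℤ)) * ((m - s).choose (k - s)) * ((m - i).choose (k + 1 - i))
      - (((i - 1).choose (s - 1) : ℤ)) * ((m - s).choose (k + 1 - s)) * ((m - i).choose (k - i))) * ha
    - ((((m - s).choose (k - s) : ℤ)) * ((m - s).choose (k + 1 - s))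
        * ((m - i).choose (k + 1 - i))) * hb
    + ((((i - 1).choose (s - 1) : ℤ)) * ((m - s).choose (k + 1 - s)) * ((m - s).choose (k - s))) * hc
    - ((((i - 1).choose (s - 1) : ℤ)) * ((m - s).choose (k + 1 - s)) * ((m - i).choose (k - i))) * hd

lemma N2 (m s k : ℕ) (hs1 : 1 ≤ s) (hsk : s ≤ k) (hkm : k + 1 ≤ m) :
    (m - s) * ((m - s - 1).choose (k - s)) * (k.choose (s - 1))
      = s * (((m - s).choose (k + 1 - s)) * (k.choose s)) := by
  have ha := factA m s k hs1 (by omega) hsk hkm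
  have hb : (k.choose s) * s = (k.choose (s - 1)) * (k + 1 - s) := by
    have h := Nat.choose_succ_right_eq k (s - 1)
    rw [show s - 1 + 1 = s by omega, show k - (s - 1) = k + 1 - s by omega] at h
    exact h
  zify [show s ≤ m by omega, show s ≤ k + 1 by omega] at ha hb ⊢
  linear_combination ((k.choose (s - 1) : ℤ)) * ha - (((m - s).choose (k + 1 - s) : ℤ)) * hb

lemma recAux (m : ℕ) (R : ℕ → ℝ) (d : ℝ) (hd : d ≠ 0) (s k : ℕ)
    (hs1 : 1 ≤ s) (hsm : s < m) (hsk : s ≤ k) (hkm : k + 1 ≤ m) :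
    (∑ i ∈ Icc s k, ((-1 : ℝ)) ^ (i - s) * ((i - 1).choose (i - s)) * ((m - i).choose (k - i))
        * R i) / (((m - s).choose (k - s) : ℝ) * d)
      - (∑ i ∈ Icc s (k + 1), ((-1 : ℝ)) ^ (i - s) * ((i - 1).choose (i - s))
          * ((m - i).choose (k + 1 - i)) * R i) / (((m - s).choose (k + 1 - s) : ℝ) * d)
      = ((s : ℝ) / ((m : ℝ) - s)) *
        ((∑ i ∈ Icc (s + 1) (k + 1), ((-1 : ℝ)) ^ (i - (s + 1)) * ((i - 1).choose (i - (s + 1)))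
            * ((m - i).choose (k + 1 - i)) * R i)
          / (((m - (s + 1)).choose (k + 1 - (s + 1)) : ℝ) * d)) := by
  have hc3arg : (m - (s + 1)).choose (k + 1 - (s + 1)) = (m - s - 1).choose (k - s) := by
    congr 1 <;> omega
  rw [hc3arg]
  set c1 : ℝ := ((m - s).choose (k - s) : ℝ) with hc1def
  set c2 : ℝ := ((m - s).choose (k + 1 - s) : ℝ) with hc2def
  set c3 : ℝ := ((m - s - 1).choose (k - s) : ℝ) with hc3def
  set S1 := ∑ i ∈ Icc s k, ((-1 : ℝ)) ^ (i - s) * ((i - 1).choose (i - s))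
      * ((m - i).choose (k - i)) * R i with hS1
  set S2 := ∑ i ∈ Icc s (k + 1), ((-1 : ℝ)) ^ (i - s) * ((i - 1).choose (i - s))
      * ((m - i).choose (k + 1 - i)) * R i with hS2
  set S3 := ∑ i ∈ Icc (s + 1) (k + 1), ((-1 : ℝ)) ^ (i - (s + 1)) * ((i - 1).choose (i - (s + 1)))
      * ((m - i).choose (k + 1 - i)) * R i with hS3
  have hMs : ((m : ℝ) - s) = ((m - s : ℕ) : ℝ) := by
    push_cast [Nat.cast_sub (by omega : s ≤ m)]; ring
  have hc1 : c1 ≠ 0 := Nat.cast_ne_zero.mpr (Nat.choose_pos (by omega)).ne'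
  have hc2 : c2 ≠ 0 := Nat.cast_ne_zero.mpr (Nat.choose_pos (by omega)).ne'
  have hc3 : c3 ≠ 0 := Nat.cast_ne_zero.mpr (Nat.choose_pos (by omega)).ne'
  have hms : ((m : ℝ) - s) ≠ 0 := by
    have : (s : ℝ) < m := by exact_mod_cast hsm
    linarith
  -- the key polynomial identity between the three sums
  have key : ((m : ℝ) - s) * c2 * c3 * S1 - ((m : ℝ) - s) * c1 * c3 * S2
      = (s : ℝ) * c1 * c2 * S3 := by
    have hsplit2 : S2 = (∑ i ∈ Icc s k, ((-1 : ℝ)) ^ (i - s) * ((i - 1).choose (i - s))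
        * ((m - i).choose (k + 1 - i)) * R i)
        + ((-1 : ℝ)) ^ (k + 1 - s) * ((k + 1 - 1).choose (k + 1 - s))
          * ((m - (k + 1)).choose (k + 1 - (k + 1))) * R (k + 1) := by
      rw [hS2, Finset.sum_Icc_succ_top (by omega)]
    have hsplit3 : S3 = (∑ i ∈ Icc (s + 1) k, ((-1 : ℝ)) ^ (i - (s + 1))
        * ((i - 1).choose (i - (s + 1))) * ((m - i).choose (k + 1 - i)) * R i)
        + ((-1 : ℝ)) ^ (k + 1 - (s + 1)) * ((k + 1 - 1).choose (k + 1 - (s + 1)))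
          * ((m - (k + 1)).choose (k + 1 - (k + 1))) * R (k + 1) := by
      rw [hS3, Finset.sum_Icc_succ_top (by omega)]
    have hins : Icc s k = insert s (Icc (s + 1) k) := by
      ext a
      simp only [mem_Icc, mem_insert]
      omega
    have hnotmem : s ∉ Icc (s + 1) k := by simp
    have hbot1 : S1 = c1 * R s + ∑ i ∈ Icc (s + 1) k, ((-1 : ℝ)) ^ (i - s)
        * ((i - 1).choose (i - s)) * ((m - i).choose (k - i)) * R i := by
      rw [hS1, hins, Finset.sum_insert hnotmem, Nat.sub_self, pow_zero, Nat.choose_zero_right]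
      push_cast
      ring
    have hbot2 : (∑ i ∈ Icc s k, ((-1 : ℝ)) ^ (i - s) * ((i - 1).choose (i - s))
        * ((m - i).choose (k + 1 - i)) * R i)
        = c2 * R s + ∑ i ∈ Icc (s + 1) k, ((-1 : ℝ)) ^ (i - s)
          * ((i - 1).choose (i - s)) * ((m - i).choose (k + 1 - i)) * R i := by
      rw [hins, Finset.sum_insert hnotmem, Nat.sub_self, pow_zero, Nat.choose_zero_right]
      push_cast
      ring
    -- termwise identity on Icc (s+1) k
    have hsums : ((m : ℝ) - s) * c2 * c3 * (∑ i ∈ Icc (s + 1) k, ((-1 : ℝ)) ^ (i - s)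
          * ((i - 1).choose (i - s)) * ((m - i).choose (k - i)) * R i)
        = ((m : ℝ) - s) * c1 * c3 * (∑ i ∈ Icc (s + 1) k, ((-1 : ℝ)) ^ (i - s)
            * ((i - 1).choose (i - s)) * ((m - i).choose (k + 1 - i)) * R i)
          + (s : ℝ) * c1 * c2 * (∑ i ∈ Icc (s + 1) k, ((-1 : ℝ)) ^ (i - (s + 1))
            * ((i - 1).choose (i - (s + 1))) * ((m - i).choose (k + 1 - i)) * R i) := by
      rw [Finset.mul_sum, Finset.mul_sum, Finset.mul_sum, ← Finset.sum_add_distrib]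
      apply Finset.sum_congr rfl
      intro i hi
      simp only [mem_Icc] at hi
      have hsym1 : (i - 1).choose (i - s) = (i - 1).choose (s - 1) := by
        rw [← Nat.choose_symm (show i - s ≤ i - 1 by omega)]
        congr 1
        omega
      have hsym2 : (i - 1).choose (i - (s + 1)) = (i - 1).choose s := by
        rw [← Nat.choose_symm (show i - (s + 1) ≤ i - 1 by omega)]
        congr 1
        omega
      have hpow : ((-1 : ℝ)) ^ (i - s) = -((-1 : ℝ)) ^ (i - (s + 1)) := by
        rw [show i - s = (i - (s + 1)) + 1 by omega, pow_succ]
        ring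
      rw [hsym1, hsym2, hpow]
      have hN := N1 m s k i hs1 (by omega) hi.2 hkm
      have hNr : ((m - s : ℕ) : ℝ) * ((m - s - 1).choose (k - s)) * (((i - 1).choose (s - 1))
          * (((m - s).choose (k - s)) * ((m - i).choose (k + 1 - i))))
          = ((m - s : ℕ) : ℝ) * ((m - s - 1).choose (k - s)) * (((i - 1).choose (s - 1))
              * (((m - s).choose (k + 1 - s)) * ((m - i).choose (k - i))))
            + (s : ℝ) * (((m - s).choose (k - s)) * (((m - s).choose (k + 1 - s))
              * (((i - 1).choose s) * ((m - i).choose (k + 1 - i))))) := by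
        exact_mod_cast congrArg (Nat.cast : ℕ → ℝ) hN
      rw [hc1def, hc2def, hc3def, hMs]
      linear_combination (((-1 : ℝ)) ^ (i - (s + 1)) * R i) * hNr
    -- boundary identity
    have hbound : ((m : ℝ) - s) * c1 * c3 * (((-1 : ℝ)) ^ (k + 1 - s)
          * ((k + 1 - 1).choose (k + 1 - s)) * ((m - (k + 1)).choose (k + 1 - (k + 1))) * R (k + 1))
        + (s : ℝ) * c1 * c2 * (((-1 : ℝ)) ^ (k + 1 - (s + 1))
          * ((k + 1 - 1).choose (k + 1 - (s + 1))) * ((m - (k + 1)).choose (k + 1 - (k + 1)))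
          * R (k + 1)) = 0 := by
      have e1 : k + 1 - 1 = k := by omega
      have e2 : (m - (k + 1)).choose (k + 1 - (k + 1)) = 1 := by
        rw [Nat.sub_self, Nat.choose_zero_right]
      have e3 : k.choose (k + 1 - s) = k.choose (s - 1) := by
        rw [← Nat.choose_symm (show k + 1 - s ≤ k by omega)]
        congr 1
        omega
      have e4 : k.choose (k + 1 - (s + 1)) = k.choose s := by
        rw [← Nat.choose_symm (show k + 1 - (s + 1) ≤ k by omega)]
        congr 1
        omega
      have hpow : ((-1 : ℝ)) ^ (k + 1 - s) = -((-1 : ℝ)) ^ (k + 1 - (s + 1)) := by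
        rw [show k + 1 - s = (k + 1 - (s + 1)) + 1 by omega, pow_succ]
        ring
      have hN := N2 m s k hs1 hsk hkm
      have hNr : ((m - s : ℕ) : ℝ) * ((m - s - 1).choose (k - s)) * (k.choose (s - 1))
          = (s : ℝ) * (((m - s).choose (k + 1 - s)) * (k.choose s)) := by
        exact_mod_cast congrArg (Nat.cast : ℕ → ℝ) hN
      rw [e1, e2, e3, e4, hpow, hc1def, hc2def, hc3def, hMs,
        show k + 1 - (s + 1) = k - s by omega]
      push_cast
      linear_combination (-(((-1 : ℝ)) ^ (k - s)) * R (k + 1)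
        * ((m - s).choose (k - s) : ℝ)) * hNr
    rw [hsplit2, hsplit3, hbot1, hbot2]
    linear_combination hsums - hbound
  -- final division bookkeeping
  rw [div_sub_div _ _ (mul_ne_zero hc1 hd) (mul_ne_zero hc2 hd), div_mul_div_comm,
    div_eq_div_iff (by positivity) (by positivity)]
  ring_nf
  linear_combination (d * d) * key

theorem chung_type_bound_monotone_convex
    {Ω : Type*} [MeasurableSpace Ω] (μ : Measure Ω) [IsProbabilityMeasure μ]
    (m n : ℕ) (S T : Ω → ℕ) (hS : Measurable S) (hT : Measurable T)
    (hSm : ∀ᵐ ω ∂μ, S ω ≤ m) (hTn : ∀ᵐ ω ∂μ, T ω ≤ n)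
    (t l : ℕ) (ht1 : 1 ≤ t) (htl : t ≤ l) (hln : l ≤ n)
    (A : ℕ → ℕ → ℝ)
    (hA : ∀ s k, A s k =
      (∑ i ∈ Finset.Icc s k, ∑ j ∈ Finset.Icc t l,
          (-1 : ℝ) ^ ((i - s) + (j - t)) * ((i - 1).choose (i - s)) *
            ((m - i).choose (k - i)) * ((j - 1).choose (j - t)) *
            ((n - j).choose (l - j)) *
            ∫ ω, (((S ω).choose i : ℝ) * ((T ω).choose j : ℝ)) ∂μ) /
        (((m - s).choose (k - s) : ℝ) * ((n - t).choose (l - t) : ℝ)))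
    (s : ℕ) (hs1 : 1 ≤ s) (hsm : s < m) :
    (∀ k, s ≤ k → k ≤ m - 1 →
        A s k - A s (k + 1) = ((s : ℝ) / ((m : ℝ) - s)) * A (s + 1) (k + 1)) ∧
      (∀ k, s ≤ k → k ≤ m - 1 → A s (k + 1) ≤ A s k) ∧
      (∀ k, s ≤ k → k + 2 ≤ m → A s (k + 1) - A s (k + 2) ≤ A s k - A s (k + 1)) := by
  have hd : (((n - t).choose (l - t) : ℝ)) ≠ 0 :=
    Nat.cast_ne_zero.mpr (Nat.choose_pos (by omega)).ne'
  -- representation with the j-sum factored per i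
  have hrep : ∀ σ κ, A σ κ =
      (∑ i ∈ Finset.Icc σ κ, (-1 : ℝ) ^ (i - σ) * ((i - 1).choose (i - σ)) *
          ((m - i).choose (κ - i)) *
          (∑ j ∈ Finset.Icc t l, (-1 : ℝ) ^ (j - t) * ((j - 1).choose (j - t)) *
            ((n - j).choose (l - j)) *
            ∫ ω, (((S ω).choose i : ℝ) * ((T ω).choose j : ℝ)) ∂μ)) /
        (((m - σ).choose (κ - σ) : ℝ) * ((n - t).choose (l - t) : ℝ)) := by
    intro σ κ
    rw [hA]
    congr 1
    apply Finset.sum_congr rfl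
    intro i _
    rw [Finset.mul_sum]
    apply Finset.sum_congr rfl
    intro j _
    rw [pow_add]
    ring
  -- integrability
  have hint : ∀ i j : ℕ,
      Integrable (fun ω => ((S ω).choose i : ℝ) * ((T ω).choose j : ℝ)) μ := by
    intro i j
    have m1 : Measurable fun ω => ((S ω).choose i : ℝ) :=
      Measurable.comp (g := fun a : ℕ => (a.choose i : ℝ)) measurable_from_top hS
    have m2 : Measurable fun ω => ((T ω).choose j : ℝ) :=
      Measurable.comp (g := fun a : ℕ => (a.choose j : ℝ)) measurable_from_top hT
    refine ⟨(m1.mul m2).aestronglyMeasurable,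
      MeasureTheory.HasFiniteIntegral.of_bounded
        (C := (m.choose i : ℝ) * (n.choose j : ℝ)) ?_⟩
    filter_upwards [hSm, hTn] with ω h1 h2
    rw [Real.norm_eq_abs, abs_mul, abs_of_nonneg (by positivity), abs_of_nonneg (by positivity)]
    have g1 : ((S ω).choose i : ℝ) ≤ (m.choose i : ℝ) := by
      exact_mod_cast Nat.choose_le_choose i h1
    have g2 : ((T ω).choose j : ℝ) ≤ (n.choose j : ℝ) := by
      exact_mod_cast Nat.choose_le_choose j h2
    exact mul_le_mul g1 g2 (by positivity) (by positivity)
  -- nonnegativity of A σ κ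
  have hnonneg : ∀ σ κ, 1 ≤ σ → σ ≤ κ → κ ≤ m → 0 ≤ A σ κ := by
    intro σ κ h1 h2 h3
    rw [hrep σ κ]
    apply div_nonneg _ (by positivity)
    have hswap : (∑ i ∈ Finset.Icc σ κ, (-1 : ℝ) ^ (i - σ) * ((i - 1).choose (i - σ)) *
          ((m - i).choose (κ - i)) *
          (∑ j ∈ Finset.Icc t l, (-1 : ℝ) ^ (j - t) * ((j - 1).choose (j - t)) *
            ((n - j).choose (l - j)) *
            ∫ ω, (((S ω).choose i : ℝ) * ((T ω).choose j : ℝ)) ∂μ))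
        = ∫ ω, (∑ i ∈ Finset.Icc σ κ, (-1 : ℝ) ^ (i - σ) * ((i - 1).choose (i - σ)) *
              ((m - i).choose (κ - i)) * ((S ω).choose i : ℝ)) *
            (∑ j ∈ Finset.Icc t l, (-1 : ℝ) ^ (j - t) * ((j - 1).choose (j - t)) *
              ((n - j).choose (l - j)) * ((T ω).choose j : ℝ)) ∂μ := by
      have e1 : ∀ i, (-1 : ℝ) ^ (i - σ) * ((i - 1).choose (i - σ)) *
            ((m - i).choose (κ - i)) *
            (∑ j ∈ Finset.Icc t l, (-1 : ℝ) ^ (j - t) * ((j - 1).choose (j - t)) *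
              ((n - j).choose (l - j)) *
              ∫ ω, (((S ω).choose i : ℝ) * ((T ω).choose j : ℝ)) ∂μ)
          = ∑ j ∈ Finset.Icc t l, ∫ ω,
              ((-1 : ℝ) ^ (i - σ) * ((i - 1).choose (i - σ)) * ((m - i).choose (κ - i)) *
                ((-1 : ℝ) ^ (j - t) * ((j - 1).choose (j - t)) * ((n - j).choose (l - j)))) *
              (((S ω).choose i : ℝ) * ((T ω).choose j : ℝ)) ∂μ := by
        intro i
        rw [Finset.mul_sum]
        apply Finset.sum_congr rfl
        intro j _
        rw [MeasureTheory.integral_const_mul]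
        ring
      calc ∑ i ∈ Finset.Icc σ κ, (-1 : ℝ) ^ (i - σ) * ((i - 1).choose (i - σ)) *
            ((m - i).choose (κ - i)) *
            (∑ j ∈ Finset.Icc t l, (-1 : ℝ) ^ (j - t) * ((j - 1).choose (j - t)) *
              ((n - j).choose (l - j)) *
              ∫ ω, (((S ω).choose i : ℝ) * ((T ω).choose j : ℝ)) ∂μ)
          = ∑ i ∈ Finset.Icc σ κ, ∫ ω, ∑ j ∈ Finset.Icc t l,
              ((-1 : ℝ) ^ (i - σ) * ((i - 1).choose (i - σ)) * ((m - i).choose (κ - i)) *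
                ((-1 : ℝ) ^ (j - t) * ((j - 1).choose (j - t)) * ((n - j).choose (l - j)))) *
              (((S ω).choose i : ℝ) * ((T ω).choose j : ℝ)) ∂μ := by
            apply Finset.sum_congr rfl
            intro i _
            rw [e1 i, ← MeasureTheory.integral_finset_sum _
              (fun j _ => (hint i j).const_mul _)]
        _ = ∫ ω, ∑ i ∈ Finset.Icc σ κ, ∑ j ∈ Finset.Icc t l,
              ((-1 : ℝ) ^ (i - σ) * ((i - 1).choose (i - σ)) * ((m - i).choose (κ - i)) *
                ((-1 : ℝ) ^ (j - t) * ((j - 1).choose (j - t)) * ((n - j).choose (l - j)))) *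
              (((S ω).choose i : ℝ) * ((T ω).choose j : ℝ)) ∂μ := by
            rw [← MeasureTheory.integral_finset_sum _ (fun i _ =>
              integrable_finset_sum _ (fun j _ => (hint i j).const_mul _))]
        _ = _ := by
            apply MeasureTheory.integral_congr_ae
            filter_upwards with ω
            rw [Finset.sum_mul_sum]
            apply Finset.sum_congr rfl
            intro i _
            apply Finset.sum_congr rfl
            intro j _
            ring
    rw [hswap]
    apply MeasureTheory.integral_nonneg_of_ae
    filter_upwards [hSm, hTn] with ω hw1 hw2
    rw [closedForm m σ κ (S ω) h1 h2 h3 hw1, closedForm n t l (T ω) ht1 htl hln hw2]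
    apply mul_nonneg <;>
      · apply Finset.sum_nonneg
        intro u _
        positivity
  -- recurrence
  have hrec : ∀ σ k', 1 ≤ σ → σ < m → σ ≤ k' → k' + 1 ≤ m →
      A σ k' - A σ (k' + 1) = ((σ : ℝ) / ((m : ℝ) - σ)) * A (σ + 1) (k' + 1) := by
    intro σ k' h1 h2 h3 h4
    rw [hrep σ k', hrep σ (k' + 1), hrep (σ + 1) (k' + 1)]
    exact recAux m (fun i => ∑ j ∈ Finset.Icc t l,
      (-1 : ℝ) ^ (j - t) * ((j - 1).choose (j - t)) * ((n - j).choose (l - j)) *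
        ∫ ω, (((S ω).choose i : ℝ) * ((T ω).choose j : ℝ)) ∂μ)
      _ hd σ k' h1 h2 h3 h4
  have hcpos : ∀ σ : ℕ, σ < m → 0 ≤ (σ : ℝ) / ((m : ℝ) - σ) := by
    intro σ hσ
    apply div_nonneg (by positivity)
    have : (σ : ℝ) < m := by exact_mod_cast hσ
    linarith
  refine ⟨?_, ?_, ?_⟩
  · intro k hk1 hk2
    exact hrec s k hs1 hsm hk1 (by omega)
  · intro k hk1 hk2
    have h := hrec s k hs1 hsm hk1 (by omega)
    have h2 := hnonneg (s + 1) (k + 1) (by omega) (by omega) (by omega)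
    have := mul_nonneg (hcpos s hsm) h2
    linarith
  · intro k hk1 hk2
    have e1 := hrec s k hs1 hsm hk1 (by omega)
    have e2 := hrec s (k + 1) hs1 hsm (by omega) (by omega)
    have e3 := hrec (s + 1) (k + 1) (by omega) (by omega) (by omega) (by omega)
    have h4 := hnonneg (s + 2) (k + 2) (by omega) (by omega) (by omega)
    have hc1 := hcpos s hsm
    have hc2 := hcpos (s + 1) (by omega)
    have hmono : A (s + 1) (k + 2) ≤ A (s + 1) (k + 1) := by
      have := mul_nonneg hc2 h4
      push_cast at e3 this ⊢
      linarith
    have := mul_le_mul_of_nonneg_left hmono hc1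
    linarith
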